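/- Rao-type bound: let B be an orthogonal array of strength k (k even) with q levels and n columns containing the all-zeros row, i.e., a uniformly chosen row of B has k-wise independent entries each uniform in GF(q). Then the number R of rows of B satisfies R ≥ q^n · P(Bin(n, 1 - 1/q) ≤ k/2). -/

import Mathlib

open Finset


lemma fiber_eq (F : Type) [Fintype F] [DecidableEq F] [Zero F] (n : ℕ) (S : Finset (Fin n)) :
    (univ.filter fun c : Fin n → F => (univ.filter fun j => c j ≠ 0) = S)
      = Fintype.piFinset (fun j => if j ∈ S then (univ : Finset F).erase 0 else {0}) := by
  ext c
  simp only [mem_filter, mem_univ, true_and, Fintype.mem_piFinset]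
  constructor
  · intro h j
    split_ifs with hj
    · rw [← h] at hj
      simp only [mem_filter, mem_univ, true_and] at hj
      simp [hj]
    · rw [← h] at hj
      simp only [mem_filter, mem_univ, true_and, not_not] at hj
      simp [hj]
  · intro h
    ext j
    simp only [mem_filter, mem_univ, true_and]
    have := h j
    split_ifs at this with hj
    · simp only [Finset.mem_erase, Finset.mem_univ, and_true] at this
      exact ⟨fun _ => hj, fun _ => this⟩
    · simp only [Finset.mem_singleton] at this
      exact ⟨fun hc => absurd this hc, fun hc => absurd hc hj⟩

lemma count_support_le (F : Type) [Fintype F] [DecidableEq F] [Zero F] (n m : ℕ) :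
    Fintype.card {c : Fin n → F // (univ.filter fun j => c j ≠ 0).card ≤ m}
      = ∑ j ∈ Finset.range (m + 1), n.choose j * (Fintype.card F - 1) ^ j := by
  classical
  rw [Fintype.card_subtype]
  rw [Finset.card_eq_sum_card_fiberwise
    (f := fun c : Fin n → F => univ.filter fun j => c j ≠ 0)
    (t := (univ : Finset (Finset (Fin n))).filter fun S => S.card ≤ m)
    (fun c hc => by simpa using (mem_filter.mp hc).2)]
  have h1 : ∀ S ∈ (univ : Finset (Finset (Fin n))).filter fun S => S.card ≤ m,
      ((univ.filter fun c : Fin n → F => (univ.filter fun j => c j ≠ 0).card ≤ m).filter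
        (fun c => (univ.filter fun j => c j ≠ 0) = S)).card
      = (Fintype.card F - 1) ^ S.card := by
    intro S hS
    rw [mem_filter] at hS
    have heq : ((univ.filter fun c : Fin n → F => (univ.filter fun j => c j ≠ 0).card ≤ m).filter
        (fun c => (univ.filter fun j => c j ≠ 0) = S))
        = univ.filter fun c : Fin n → F => (univ.filter fun j => c j ≠ 0) = S := by
      ext c
      simp only [mem_filter, mem_univ, true_and, and_iff_right_iff_imp]
      intro h; rw [h]; exact hS.2
    rw [heq, fiber_eq, Fintype.card_piFinset]
    have hcards : ∀ j : Fin n, ((if j ∈ S then (univ : Finset F).erase 0 else {0}).card)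
        = if j ∈ S then Fintype.card F - 1 else 1 := by
      intro j; split_ifs
      · rw [Finset.card_erase_of_mem (mem_univ 0), Finset.card_univ]
      · rw [Finset.card_singleton]
    rw [Finset.prod_congr rfl fun j _ => hcards j, Finset.prod_ite_mem, univ_inter,
      Finset.prod_const]
  rw [Finset.sum_congr rfl h1]
  rw [← Finset.sum_fiberwise_of_maps_to'
    (g := fun S : Finset (Fin n) => S.card) (t := Finset.range (m+1))
    (fun S hS => by simpa using Nat.lt_succ_of_le (mem_filter.mp hS).2)
    (fun j => (Fintype.card F - 1) ^ j)]
  refine Finset.sum_congr rfl fun j hj => ?_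
  rw [Finset.mem_range, Nat.lt_succ_iff] at hj
  have h2 : ((univ : Finset (Finset (Fin n))).filter fun S => S.card ≤ m).filter
      (fun S => S.card = j) = Finset.powersetCard j univ := by
    ext S
    simp only [mem_filter, mem_univ, true_and, Finset.mem_powersetCard_univ]
    constructor
    · exact fun h => h.2
    · exact fun h => ⟨h ▸ hj, h⟩
  rw [h2, Finset.sum_const, Finset.card_powersetCard, Finset.card_univ, Fintype.card_fin,
    smul_eq_mul]

lemma row_sum (K : Type*) [Field K] [CharZero K]
    (F : Type) [Field F] [Fintype F] [DecidableEq F]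
    (χ : AddChar F K) (hsum : ∀ b : F, b ≠ 0 → ∑ x : F, χ (b * x) = 0)
    (q R n k : ℕ) (hq0 : q ≠ 0)
    (B : Fin R → Fin n → F)
    (hcount : ∀ S : Finset (Fin n), S.card ≤ k → ∀ c : Fin n → F,
      (univ.filter (fun r : Fin R => ∀ j ∈ S, B r j = c j)).card * q ^ S.card = R)
    (e : Fin n → F) (he : (univ.filter fun j => e j ≠ 0).card ≤ k) :
    ∑ r, ∏ j, χ (e j * B r j) = if e = 0 then (R : K) else 0 := by
  by_cases he0 : e = 0
  · subst he0
    simp only [Pi.zero_apply, zero_mul, AddChar.map_zero_eq_one, Finset.prod_const_one,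
      Finset.sum_const, Finset.card_univ, Fintype.card_fin, nsmul_eq_mul, mul_one, if_true]
  · rw [if_neg he0]
    set S := univ.filter fun j => e j ≠ 0 with hS
    have hprod : ∀ x : Fin n → F, ∏ j, χ (e j * x j) = ∏ j ∈ S, χ (e j * x j) := by
      intro x
      rw [← Finset.prod_filter_mul_prod_filter_not univ (fun j => e j ≠ 0)]
      have : ∀ j ∈ univ.filter (fun j => ¬ e j ≠ 0), χ (e j * x j) = 1 := by
        intro j hj
        rw [mem_filter, not_not] at hj
        rw [hj.2, zero_mul, AddChar.map_zero_eq_one]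
      rw [Finset.prod_congr rfl this, Finset.prod_const_one, mul_one]
    set t := fun j : Fin n => if j ∈ S then (univ : Finset F) else ({0} : Finset F) with ht
    set proj := fun (r : Fin R) (j : Fin n) => if j ∈ S then B r j else 0 with hproj
    have hmaps : ∀ r ∈ (univ : Finset (Fin R)), proj r ∈ Fintype.piFinset t := by
      intro r _
      rw [Fintype.mem_piFinset]
      intro j
      simp only [hproj, ht]
      split_ifs <;> simp
    have key : (q : K) ^ S.card * ∑ r, ∏ j ∈ S, χ (e j * B r j) = 0 := by
      rw [← Finset.sum_fiberwise_of_maps_to hmaps (fun r => ∏ j ∈ S, χ (e j * B r j))]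
      have inner : ∀ v ∈ Fintype.piFinset t,
          ∑ r ∈ univ.filter (fun r => proj r = v), ∏ j ∈ S, χ (e j * B r j)
          = ((univ.filter (fun r : Fin R => ∀ j ∈ S, B r j = v j)).card : K)
              * ∏ j ∈ S, χ (e j * v j) := by
        intro v hv
        have hfib : univ.filter (fun r => proj r = v)
            = univ.filter (fun r : Fin R => ∀ j ∈ S, B r j = v j) := by
          ext r
          simp only [mem_filter, mem_univ, true_and]
          constructor
          · intro h j hj
            rw [← h]
            simp only [hproj, if_pos hj]
          · intro h
            funext j
            by_cases hj : j ∈ S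
            · simp only [hproj, if_pos hj]; exact h j hj
            · simp only [hproj, if_neg hj]
              have := Fintype.mem_piFinset.mp hv j
              rw [ht] at this
              simp only [if_neg hj, Finset.mem_singleton] at this
              exact this.symm
        rw [hfib]
        have hcng : ∀ r ∈ univ.filter (fun r : Fin R => ∀ j ∈ S, B r j = v j),
            ∏ j ∈ S, χ (e j * B r j) = ∏ j ∈ S, χ (e j * v j) := by
          intro r hr
          rw [mem_filter] at hr
          exact Finset.prod_congr rfl fun j hj => by rw [hr.2 j hj]
        rw [Finset.sum_congr rfl hcng, Finset.sum_const, nsmul_eq_mul]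
      rw [Finset.sum_congr rfl inner, Finset.mul_sum]
      have step : ∀ v ∈ Fintype.piFinset t,
          (q : K) ^ S.card * (((univ.filter (fun r : Fin R => ∀ j ∈ S, B r j = v j)).card : K)
              * ∏ j ∈ S, χ (e j * v j))
          = (R : K) * ∏ j, χ (e j * v j) := by
        intro v _
        rw [← hprod v, ← mul_assoc, mul_comm ((q:K) ^ S.card), ← Nat.cast_pow, ← Nat.cast_mul,
          hcount S he v]
      rw [Finset.sum_congr rfl step, ← Finset.mul_sum]
      rw [← Finset.prod_univ_sum t (fun j x => χ (e j * x))]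
      obtain ⟨j0, hj0⟩ := Function.ne_iff.mp he0
      simp only [Pi.zero_apply] at hj0
      have hj0S : j0 ∈ S := by simp [hS, hj0]
      have : ∑ x ∈ t j0, χ (e j0 * x) = 0 := by
        rw [ht]
        simp only [if_pos hj0S]
        exact hsum (e j0) hj0
      rw [Finset.prod_eq_zero (mem_univ j0) this, mul_zero]
    have hqK : (q : K) ^ S.card ≠ 0 := pow_ne_zero _ (Nat.cast_ne_zero.mpr hq0)
    have := mul_eq_zero.mp key
    rcases this with h | h
    · exact absurd h hqK
    · rw [Finset.sum_congr rfl fun r _ => hprod (B r)]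
      exact h


/-- Rao-type bound: let `B : Fin R → Fin n → F` be an orthogonal array of even strength
`k` over a finite field `F` with `q` elements (a uniformly chosen row has `k`-wise
independent entries, each uniform in `F`), containing the all-zeros row. Then
`R ≥ qⁿ · P(Bin(n, 1 - 1/q) ≤ k/2)`. -/
theorem rao_bound (F : Type) [Field F] [Fintype F] [DecidableEq F]
    (q : ℕ) (hq : q = Fintype.card F)
    (R n k : ℕ) (hR : 0 < R) (hk : Even k)
    (B : Fin R → Fin n → F)
    (hzero : ∃ r0 : Fin R, ∀ j : Fin n, B r0 j = 0)
    (hOA : ∀ S : Finset (Fin n), S.card ≤ k → ∀ c : Fin n → F,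
      ((univ.filter (fun r : Fin R => ∀ j ∈ S, B r j = c j)).card : ℝ) / R
        = (1 / (q : ℝ)) ^ S.card) :
    (R : ℝ) ≥ (q : ℝ) ^ n * ∑ j ∈ Finset.range (k / 2 + 1),
        (n.choose j : ℝ) * (1 - 1 / (q : ℝ)) ^ j * (1 / (q : ℝ)) ^ (n - j) := by
  classical
  have hq1 : 1 < q := by rw [hq]; exact Fintype.one_lt_card
  have hq0 : q ≠ 0 := by omega
  have hR0 : (R : ℝ) ≠ 0 := Nat.cast_ne_zero.mpr hR.ne'
  have hqR0 : (q : ℝ) ≠ 0 := Nat.cast_ne_zero.mpr hq0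
  -- integer version of the OA condition
  have hcount : ∀ S : Finset (Fin n), S.card ≤ k → ∀ c : Fin n → F,
      (univ.filter (fun r : Fin R => ∀ j ∈ S, B r j = c j)).card * q ^ S.card = R := by
    intro S hSk c
    have h' := hOA S hSk c
    rw [div_eq_iff hR0] at h'
    have h2 : (((univ.filter (fun r : Fin R => ∀ j ∈ S, B r j = c j)).card
        * q ^ S.card : ℕ) : ℝ) = ((R : ℕ) : ℝ) := by
      push_cast
      rw [h', one_div, inv_pow, mul_comm ((q:ℝ)^S.card)⁻¹, mul_assoc,
        inv_mul_cancel₀ (pow_ne_zero _ hqR0), mul_one]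
    exact_mod_cast h2
  -- the additive character
  have hchar : ringChar ℂ ≠ ringChar F := by
    rw [ringChar.eq_zero]
    exact (CharP.ringChar_ne_zero_of_finite F).symm
  set ψ := AddChar.FiniteField.primitiveChar F ℂ hchar with hψ
  set K := CyclotomicField ψ.n ℂ with hK
  haveI : CharZero K := charZero_of_injective_algebraMap (algebraMap ℂ K).injective
  set χ : AddChar F K := ψ.char with hχ
  have hsum : ∀ b : F, b ≠ 0 → ∑ x : F, χ (b * x) = 0 := by
    intro b hb
    have := AddChar.sum_mulShift b ψ.prim
    rw [if_neg hb] at this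
    simpa [mul_comm] using this
  -- the index type
  let T := {c : Fin n → F // (univ.filter fun j => c j ≠ 0).card ≤ k / 2}
  let V : T → (Fin R → K) := fun c r => ∏ j, χ (c.1 j * B r j)
  -- linear independence
  have hli : LinearIndependent K V := by
    rw [Fintype.linearIndependent_iff]
    intro g hg d
    have h0 : ∀ r : Fin R, ∑ c : T, g c * V c r = 0 := by
      intro r
      have := congrFun hg r
      simpa [Finset.sum_apply] using this
    have hVc : ∀ c : T, ∑ r, (V c r * ∏ j, χ (-(d.1 j) * B r j))
        = if c = d then (R : K) else 0 := by
      intro c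
      have hpt : ∀ r, V c r * ∏ j, χ (-(d.1 j) * B r j)
          = ∏ j, χ ((c.1 - d.1) j * B r j) := by
        intro r
        rw [← Finset.prod_mul_distrib]
        refine Finset.prod_congr rfl fun j _ => ?_
        rw [← AddChar.map_add_eq_mul]
        congr 1
        simp only [Pi.sub_apply]
        ring
      have hsupp : (univ.filter fun j => (c.1 - d.1) j ≠ 0).card ≤ k := by
        have hsub : (univ.filter fun j => (c.1 - d.1) j ≠ 0)
            ⊆ (univ.filter fun j => c.1 j ≠ 0) ∪ (univ.filter fun j => d.1 j ≠ 0) := by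
          intro j hj
          simp only [mem_filter, mem_univ, true_and, Pi.sub_apply, mem_union] at hj ⊢
          by_contra hcon
          push_neg at hcon
          rw [hcon.1, hcon.2, sub_zero] at hj
          exact hj rfl
        calc (univ.filter fun j => (c.1 - d.1) j ≠ 0).card
            ≤ ((univ.filter fun j => c.1 j ≠ 0) ∪ (univ.filter fun j => d.1 j ≠ 0)).card :=
              Finset.card_le_card hsub
          _ ≤ (univ.filter fun j => c.1 j ≠ 0).card + (univ.filter fun j => d.1 j ≠ 0).card :=
              Finset.card_union_le _ _
          _ ≤ k / 2 + k / 2 := Nat.add_le_add c.2 d.2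
          _ = k := by obtain ⟨t, rfl⟩ := hk; omega
      rw [Finset.sum_congr rfl fun r _ => hpt r,
        row_sum K F χ hsum q R n k hq0 B hcount (c.1 - d.1) hsupp]
      by_cases hcd : c = d
      · rw [if_pos hcd, if_pos (by rw [hcd, sub_self])]
      · rw [if_neg hcd, if_neg (fun h => hcd (Subtype.ext (sub_eq_zero.mp h)))]
    have key : ∑ c : T, g c * (∑ r, (V c r * ∏ j, χ (-(d.1 j) * B r j))) = 0 := by
      have swap : ∑ c : T, g c * (∑ r, (V c r * ∏ j, χ (-(d.1 j) * B r j)))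
          = ∑ r, (∑ c : T, g c * V c r) * ∏ j, χ (-(d.1 j) * B r j) := by
        rw [Finset.sum_congr rfl fun c _ => Finset.mul_sum _ _ _, Finset.sum_comm]
        refine Finset.sum_congr rfl fun r _ => ?_
        rw [Finset.sum_mul]
        exact Finset.sum_congr rfl fun c _ => (mul_assoc _ _ _).symm
      rw [swap]
      rw [Finset.sum_congr rfl fun r _ => by rw [h0 r, zero_mul], Finset.sum_const_zero]
    rw [Finset.sum_congr rfl fun c _ => by rw [hVc c]] at key
    simp only [mul_ite, mul_zero] at key
    rw [Finset.sum_ite_eq' univ d (fun c => g c * (R : K))] at key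
    rw [if_pos (mem_univ d)] at key
    have hRK : (R : K) ≠ 0 := Nat.cast_ne_zero.mpr hR.ne'
    exact (mul_eq_zero.mp key).resolve_right hRK
  -- cardinality bound
  have hcardle : Fintype.card T ≤ R := by
    have h := hli.fintype_card_le_finrank
    rwa [Module.finrank_fintype_fun_eq_card, Fintype.card_fin] at h
  have hcardeq : Fintype.card T
      = ∑ j ∈ Finset.range (k / 2 + 1), n.choose j * (q - 1) ^ j := by
    rw [count_support_le F n (k / 2), hq]
  -- numeric conclusion
  have hterm : ∀ j ∈ Finset.range (k / 2 + 1),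
      (q : ℝ) ^ n * ((n.choose j : ℝ) * (1 - 1 / (q : ℝ)) ^ j * (1 / (q : ℝ)) ^ (n - j))
      = ((n.choose j * (q - 1) ^ j : ℕ) : ℝ) := by
    intro j _
    by_cases hjn : j ≤ n
    · have hcast : ((q - 1 : ℕ) : ℝ) = (q : ℝ) - 1 := by
        have : (1:ℕ) ≤ q := hq1.le
        push_cast [this]
        ring
      rw [Nat.cast_mul, Nat.cast_pow, hcast]
      have hpow : (q:ℝ)^j * (q:ℝ)^(n-j) = (q:ℝ)^n := by
        rw [← pow_add, Nat.add_sub_cancel' hjn]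
      have h1 : (1 : ℝ) - 1 / q = ((q : ℝ) - 1) / q := by field_simp
      rw [h1, div_pow, one_div, inv_pow]
      field_simp
      linear_combination (-(n.choose j : ℝ)) * ((q:ℝ)-1)^j * hpow
    · rw [Nat.choose_eq_zero_of_lt (by omega)]
      simp
  rw [ge_iff_le, Finset.mul_sum, Finset.sum_congr rfl hterm, ← Nat.cast_sum]
  exact_mod_cast (hcardeq ▸ hcardle)
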